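/- Let ψ : ℝ → ℝ be Lipschitz with ψ ≥ 1, let a > 0, and consider for γ > 0 the solution v_γ of the ODE v'(t) = γ/ψ(v(t)) with v(0) = -a. Then there exists γ > 0 such that v_γ(1) = a. -/

import Mathlib

theorem stmt9 (ψ : ℝ → ℝ) (K : NNReal) (hψ : LipschitzWith K ψ)
    (hψ1 : ∀ t, 1 ≤ ψ t) (a : ℝ) (ha : 0 < a) :
    ∃ γ : ℝ, 0 < γ ∧ ∃ v : ℝ → ℝ, v 0 = -a ∧
      (∀ t, HasDerivAt v (γ / ψ (v t)) t) ∧ v 1 = a := by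
  have hc : Continuous ψ := hψ.continuous
  set Φ : ℝ → ℝ := fun x => ∫ s in (-a)..x, ψ s with hΦdef
  have hΦd : ∀ x, HasDerivAt Φ (ψ x) x := fun x =>
    (hc.integral_hasStrictDerivAt (-a) x).hasDerivAt
  have hψpos : ∀ x, (0:ℝ) < ψ x := fun x => lt_of_lt_of_le one_pos (hψ1 x)
  have hmono : StrictMono Φ := by
    apply strictMono_of_deriv_pos
    intro x
    rw [(hΦd x).deriv]
    exact hψpos x
  have hdiff : Differentiable ℝ Φ := fun x => (hΦd x).differentiableAt
  have hcontΦ : Continuous Φ := hdiff.continuous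
  have hge : ∀ x, -a ≤ x → x + a ≤ Φ x := by
    intro x hx
    have h1 : ∫ _ in (-a)..x, (1:ℝ) ≤ ∫ s in (-a)..x, ψ s :=
      intervalIntegral.integral_mono_on hx intervalIntegrable_const
        (hc.intervalIntegrable _ _) (fun s _ => hψ1 s)
    simpa using h1
  have hle : ∀ x, x ≤ -a → Φ x ≤ x + a := by
    intro x hx
    have h1 : ∫ _ in x..(-a), (1:ℝ) ≤ ∫ s in x..(-a), ψ s :=
      intervalIntegral.integral_mono_on hx intervalIntegrable_const
        (hc.intervalIntegrable _ _) (fun s _ => hψ1 s)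
    have h2 : Φ x = -∫ s in x..(-a), ψ s := by
      rw [hΦdef]
      exact (intervalIntegral.integral_symm _ _)
    simp only [intervalIntegral.integral_const, smul_eq_mul, mul_one] at h1
    rw [h2]; linarith
  have htop : Filter.Tendsto Φ Filter.atTop Filter.atTop := by
    apply Filter.tendsto_atTop_mono' _ _ (Filter.tendsto_atTop_add_const_right _ a Filter.tendsto_id)
    filter_upwards [Filter.eventually_ge_atTop (-a)] with x hx using hge x hx
  have hbot : Filter.Tendsto Φ Filter.atBot Filter.atBot := by
    apply Filter.tendsto_atBot_mono' _ _ (Filter.tendsto_atBot_add_const_right _ a Filter.tendsto_id)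
    filter_upwards [Filter.eventually_le_atBot (-a)] with x hx using hle x hx
  have hsurj : Function.Surjective Φ := hcontΦ.surjective htop hbot
  set e := StrictMono.orderIsoOfSurjective Φ hmono hsurj with he
  set g : ℝ → ℝ := fun y => e.symm y with hg
  have hginv : ∀ y, Φ (g y) = y := fun y =>
    StrictMono.orderIsoOfSurjective_self_symm_apply Φ hmono hsurj y
  have hgΦ : ∀ x, g (Φ x) = x := fun x =>
    StrictMono.orderIsoOfSurjective_symm_apply_self Φ hmono hsurj x
  have hΦ0 : Φ (-a) = 0 := intervalIntegral.integral_same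
  set γ : ℝ := Φ a with hγdef
  have hγpos : 0 < γ := by
    have := hmono (show -a < a by linarith)
    rw [hΦ0] at this
    exact this
  have hgcont : Continuous g := e.symm.continuous
  have hgd : ∀ y, HasDerivAt g (ψ (g y))⁻¹ y := by
    intro y
    exact HasDerivAt.of_local_left_inverse hgcont.continuousAt (hΦd (g y))
      (ne_of_gt (hψpos _)) (Filter.Eventually.of_forall hginv)
  refine ⟨γ, hγpos, fun t => g (γ * t), ?_, ?_, ?_⟩
  · show g (γ * 0) = -a
    rw [mul_zero, ← hΦ0, hgΦ]
  · intro t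
    have hlin : HasDerivAt (fun t : ℝ => γ * t) γ t := by
      simpa using (hasDerivAt_id t).const_mul γ
    have := (hgd (γ * t)).comp t hlin
    simpa [div_eq_inv_mul, Function.comp_def] using this
  · show g (γ * 1) = a
    rw [mul_one, hγdef, hgΦ]
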